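/- Let α₀ > 0, Re > 0, κ > 0 and A₀ > 0 be constants and let T > 0. Suppose H₁ : [0,T] → ℝ is differentiable and strictly positive, and H₂, F : [0,T] → ℝ are continuous and nonnegative, satisfying: (i) (1/2)·H₁'(t) ≤ α₀·H₁(t) − (1/2)·Re⁻¹·H₂(t) + κ·F(t)·H₁(t) for all t ∈ [0,T]; (ii) ⟨F⟩_T ≤ A₀²; and (iii) ⟨H₁⟩_T ≤ α₀·A₀·Re. Then ⟨H₂^{1/2}⟩_T ≤ [ 2·Re·(α₀ + κ·A₀²) + (Re/T)·ln( H₁(0)/H₁(T) ) ]^{1/2} · ( α₀·A₀·Re )^{1/2}. -/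

import Mathlib

open MeasureTheory intervalIntegral Set

/-- Conditional form of the 2d estimate for `⟨P₂,₁⟩_T = ⟨H₂^{1/2}⟩_T`:
under the vorticity inequality (i), the quartic time-average bound (ii) and the
enstrophy time-average bound (iii), one has
`⟨H₂^{1/2}⟩_T ≤ [2Re(α₀ + κA₀²) + (Re/T)·ln(H₁(0)/H₁(T))]^{1/2}·(α₀A₀Re)^{1/2}`. -/
theorem toner_tu_2d_P21_estimate (α₀ Re κ A₀ T : ℝ)
    (hα : 0 < α₀) (hRe : 0 < Re) (hκ : 0 < κ) (hA : 0 < A₀) (hT : 0 < T)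
    (H₁ H₁' H₂ F : ℝ → ℝ)
    (hd1 : ∀ t ∈ Set.Icc (0:ℝ) T, HasDerivAt H₁ (H₁' t) t)
    (hH₁pos : ∀ t ∈ Set.Icc (0:ℝ) T, 0 < H₁ t)
    (hH₂c : ContinuousOn H₂ (Set.Icc (0:ℝ) T))
    (hFc : ContinuousOn F (Set.Icc (0:ℝ) T))
    (hH₂nn : ∀ t ∈ Set.Icc (0:ℝ) T, 0 ≤ H₂ t)
    (hFnn : ∀ t ∈ Set.Icc (0:ℝ) T, 0 ≤ F t)
    (hi : ∀ t ∈ Set.Icc (0:ℝ) T,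
      (1/2) * H₁' t ≤ α₀ * H₁ t - (1/2) * Re⁻¹ * H₂ t + κ * F t * H₁ t)
    (hii : (1/T) * ∫ τ in (0:ℝ)..T, F τ ≤ A₀^2)
    (hiii : (1/T) * ∫ τ in (0:ℝ)..T, H₁ τ ≤ α₀ * A₀ * Re) :
    (1/T) * ∫ τ in (0:ℝ)..T, (H₂ τ) ^ ((1:ℝ)/2) ≤
      (2 * Re * (α₀ + κ * A₀^2) + (Re/T) * Real.log (H₁ 0 / H₁ T)) ^ ((1:ℝ)/2) *
        (α₀ * A₀ * Re) ^ ((1:ℝ)/2) := by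
  have hT' : (0:ℝ) ≤ T := hT.le
  have hIcc : Set.uIcc (0:ℝ) T = Set.Icc 0 T := Set.uIcc_of_le hT'
  have h0mem : (0:ℝ) ∈ Set.Icc (0:ℝ) T := ⟨le_rfl, hT'⟩
  have hTmem : T ∈ Set.Icc (0:ℝ) T := ⟨hT', le_rfl⟩
  have hH₁c : ContinuousOn H₁ (Set.Icc 0 T) := fun t ht =>
    ((hd1 t ht).continuousAt).continuousWithinAt
  have hH₁ne : ∀ t ∈ Set.Icc (0:ℝ) T, H₁ t ≠ 0 := fun t ht => (hH₁pos t ht).ne'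
  set g : ℝ → ℝ := fun t => H₂ t / H₁ t with hgdef
  have hgc : ContinuousOn g (Set.Icc 0 T) := hH₂c.div hH₁c hH₁ne
  have hgnn : ∀ t ∈ Set.Icc (0:ℝ) T, 0 ≤ g t := fun t ht =>
    div_nonneg (hH₂nn t ht) (hH₁pos t ht).le
  have hgcu : ContinuousOn g (Set.uIcc 0 T) := by rw [hIcc]; exact hgc
  have hFcu : ContinuousOn F (Set.uIcc 0 T) := by rw [hIcc]; exact hFc
  have hgint : IntervalIntegrable g volume 0 T := hgcu.intervalIntegrable
  have hFint : IntervalIntegrable F volume 0 T := hFcu.intervalIntegrable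
  -- Step A: differential inequality ⇒ bound on ∫ g
  set Φ : ℝ → ℝ := fun t => (∫ τ in (0:ℝ)..t, g τ) - 2*Re*α₀*t
      - 2*Re*κ*(∫ τ in (0:ℝ)..t, F τ) + Re * Real.log (H₁ t) with hΦdef
  have hΦderiv : ∀ x ∈ Set.Ioo (0:ℝ) T,
      HasDerivAt Φ (g x - 2*Re*α₀ - 2*Re*κ*F x + Re * (H₁' x / H₁ x)) x := by
    intro x hx
    have hxI : x ∈ Set.Icc (0:ℝ) T := Set.Ioo_subset_Icc_self hx
    have hnx : Set.Icc (0:ℝ) T ∈ nhds x := Icc_mem_nhds hx.1 hx.2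
    have hgx : ContinuousAt g x := hgc.continuousAt hnx
    have hFx : ContinuousAt F x := hFc.continuousAt hnx
    have hgi : IntervalIntegrable g volume 0 x :=
      hgint.mono_set (by rw [hIcc, Set.uIcc_of_le hx.1.le]; exact Set.Icc_subset_Icc le_rfl hx.2.le)
    have hFi : IntervalIntegrable F volume 0 x :=
      hFint.mono_set (by rw [hIcc, Set.uIcc_of_le hx.1.le]; exact Set.Icc_subset_Icc le_rfl hx.2.le)
    have hmeasg : StronglyMeasurableAtFilter g (nhds x) volume :=
      ContinuousOn.stronglyMeasurableAtFilter isOpen_Ioo (hgc.mono Set.Ioo_subset_Icc_self) x hx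
    have hmeasF : StronglyMeasurableAtFilter F (nhds x) volume :=
      ContinuousOn.stronglyMeasurableAtFilter isOpen_Ioo (hFc.mono Set.Ioo_subset_Icc_self) x hx
    have hA : HasDerivAt (fun u => ∫ τ in (0:ℝ)..u, g τ) (g x) x :=
      intervalIntegral.integral_hasDerivAt_right hgi hmeasg hgx
    have hB : HasDerivAt (fun u : ℝ => 2*Re*α₀*u) (2*Re*α₀) x := by
      simpa using (hasDerivAt_id x).const_mul (2*Re*α₀)
    have hC : HasDerivAt (fun u => 2*Re*κ*(∫ τ in (0:ℝ)..u, F τ)) (2*Re*κ*F x) x :=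
      (intervalIntegral.integral_hasDerivAt_right hFi hmeasF hFx).const_mul (2*Re*κ)
    have hD : HasDerivAt (fun u => Re * Real.log (H₁ u)) (Re * (H₁' x / H₁ x)) x :=
      ((hd1 x hxI).log (hH₁ne x hxI)).const_mul Re
    exact ((hA.sub hB).sub hC).add hD
  have hΦanti : AntitoneOn Φ (Set.Icc 0 T) := by
    apply antitoneOn_of_deriv_nonpos (convex_Icc 0 T)
    · -- continuity
      have h1 : ContinuousOn (fun u => ∫ τ in (0:ℝ)..u, g τ) (Set.Icc 0 T) := by
        have := intervalIntegral.continuousOn_primitive_interval' hgint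
          (by rw [hIcc]; exact h0mem)
        rwa [hIcc] at this
      have h2 : ContinuousOn (fun u => ∫ τ in (0:ℝ)..u, F τ) (Set.Icc 0 T) := by
        have := intervalIntegral.continuousOn_primitive_interval' hFint
          (by rw [hIcc]; exact h0mem)
        rwa [hIcc] at this
      exact ((h1.sub (continuousOn_const.mul continuousOn_id)).sub
        (continuousOn_const.mul h2)).add
        (continuousOn_const.mul (Real.continuousOn_log.comp hH₁c
          (fun t ht => hH₁ne t ht)))
    · intro x hx
      rw [interior_Icc] at hx
      exact (hΦderiv x hx).differentiableAt.differentiableWithinAt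
    · intro x hx
      rw [interior_Icc] at hx
      have hxI : x ∈ Set.Icc (0:ℝ) T := Set.Ioo_subset_Icc_self hx
      rw [(hΦderiv x hx).deriv]
      have h1 := hi x hxI
      have hpos := hH₁pos x hxI
      have hReinv : Re * Re⁻¹ = 1 := mul_inv_cancel₀ hRe.ne'
      have key : H₂ x + Re * H₁' x ≤ (2*Re*α₀ + 2*Re*κ*F x) * H₁ x := by
        have h1' : Re⁻¹ * H₂ x + H₁' x ≤ 2*α₀*H₁ x + 2*κ*F x*H₁ x := by linarith
        have h2' := mul_le_mul_of_nonneg_left h1' hRe.le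
        have hRR : Re * (Re⁻¹ * H₂ x) = H₂ x := by field_simp
        nlinarith [h2', hRR]
      have key2 : g x + Re * (H₁' x / H₁ x) ≤ 2*Re*α₀ + 2*Re*κ*F x := by
        rw [hgdef]
        have : H₂ x / H₁ x + Re * (H₁' x / H₁ x) = (H₂ x + Re * H₁' x) / H₁ x := by
          field_simp
        rw [this, div_le_iff₀ hpos]
        exact key
      linarith
  have hΦTle : Φ T ≤ Φ 0 := hΦanti h0mem hTmem hT'
  have hΦ0 : Φ 0 = Re * Real.log (H₁ 0) := by
    simp [hΦdef, intervalIntegral.integral_same]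
  have hlogdiv : Real.log (H₁ 0) - Real.log (H₁ T) = Real.log (H₁ 0 / H₁ T) :=
    (Real.log_div (hH₁ne 0 h0mem) (hH₁ne T hTmem)).symm
  have hgbound : (∫ τ in (0:ℝ)..T, g τ) ≤
      2*Re*α₀*T + 2*Re*κ*(∫ τ in (0:ℝ)..T, F τ) + Re * Real.log (H₁ 0 / H₁ T) := by
    have := hΦTle
    rw [hΦ0] at this
    simp only [hΦdef] at this
    have hmul : Re * Real.log (H₁ 0) - Re * Real.log (H₁ T)
        = Re * Real.log (H₁ 0 / H₁ T) := by rw [← hlogdiv]; ring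
    linarith [hmul]
  -- Step B: Cauchy–Schwarz
  set μ : Measure ℝ := volume.restrict (Set.Ioc 0 T) with hμdef
  haveI : IsFiniteMeasure μ := by
    constructor
    rw [hμdef, Measure.restrict_apply_univ]
    exact measure_Ioc_lt_top
  have hsub : Set.Ioc (0:ℝ) T ⊆ Set.Icc 0 T := Set.Ioc_subset_Icc_self
  have hmono : μ ≤ volume.restrict (Set.Icc 0 T) := Measure.restrict_mono hsub le_rfl
  have memL2 : ∀ (f : ℝ → ℝ), ContinuousOn f (Set.Icc 0 T) →
      MemLp f (ENNReal.ofReal 2) μ := by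
    intro f hfc
    obtain ⟨C, hC⟩ := isCompact_Icc.exists_bound_of_continuousOn hfc
    refine MemLp.of_bound ((hfc.aestronglyMeasurable measurableSet_Icc).mono_measure hmono) C ?_
    exact ae_restrict_of_forall_mem measurableSet_Ioc (fun x hx => hC x (hsub hx))
  have hsqrtg_c : ContinuousOn (fun τ => Real.sqrt (g τ)) (Set.Icc 0 T) :=
    Real.continuous_sqrt.comp_continuousOn hgc
  have hsqrtH₁_c : ContinuousOn (fun τ => Real.sqrt (H₁ τ)) (Set.Icc 0 T) :=
    Real.continuous_sqrt.comp_continuousOn hH₁c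
  have hconj : Real.HolderConjugate 2 2 := Real.holderConjugate_iff.mpr ⟨one_lt_two, by norm_num⟩
  have hCS := MeasureTheory.integral_mul_le_Lp_mul_Lq_of_nonneg (μ := μ) hconj
    (f := fun τ => Real.sqrt (g τ)) (g := fun τ => Real.sqrt (H₁ τ))
    (Filter.Eventually.of_forall fun x => Real.sqrt_nonneg _)
    (Filter.Eventually.of_forall fun x => Real.sqrt_nonneg _)
    (memL2 _ hsqrtg_c) (memL2 _ hsqrtH₁_c)
  -- rewrite the three integrals in hCS
  have e1 : ∫ a, Real.sqrt (g a) * Real.sqrt (H₁ a) ∂μ = ∫ τ in (0:ℝ)..T, (H₂ τ) ^ ((1:ℝ)/2) := by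
    rw [intervalIntegral.integral_of_le hT']
    refine setIntegral_congr_fun measurableSet_Ioc (fun x hx => ?_)
    have hxI := hsub hx
    rw [← Real.sqrt_mul (hgnn x hxI), hgdef]
    rw [div_mul_cancel₀ _ (hH₁ne x hxI), Real.sqrt_eq_rpow]
  have e2 : ∫ a, Real.sqrt (g a) ^ (2:ℝ) ∂μ = ∫ τ in (0:ℝ)..T, g τ := by
    rw [intervalIntegral.integral_of_le hT']
    refine setIntegral_congr_fun measurableSet_Ioc (fun x hx => ?_)
    rw [Real.rpow_two, Real.sq_sqrt (hgnn x (hsub hx))]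
  have e3 : ∫ a, Real.sqrt (H₁ a) ^ (2:ℝ) ∂μ = ∫ τ in (0:ℝ)..T, H₁ τ := by
    rw [intervalIntegral.integral_of_le hT']
    refine setIntegral_congr_fun measurableSet_Ioc (fun x hx => ?_)
    rw [Real.rpow_two, Real.sq_sqrt (hH₁pos x (hsub hx)).le]
  rw [e1, e2, e3] at hCS
  -- Final assembly
  set Ig := ∫ τ in (0:ℝ)..T, g τ with hIg
  set Ih := ∫ τ in (0:ℝ)..T, H₁ τ with hIh
  have hIgnn : 0 ≤ Ig := intervalIntegral.integral_nonneg hT'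
    (fun x hx => hgnn x hx)
  have hIhnn : 0 ≤ Ih := intervalIntegral.integral_nonneg hT'
    (fun x hx => (hH₁pos x hx).le)
  have hTpos : (0:ℝ) < 1/T := by positivity
  set B := 2 * Re * (α₀ + κ * A₀^2) + (Re/T) * Real.log (H₁ 0 / H₁ T) with hBdef
  have haB : (1/T) * Ig ≤ B := by
    have hF2 : κ * ((1/T) * ∫ τ in (0:ℝ)..T, F τ) ≤ κ * A₀^2 :=
      mul_le_mul_of_nonneg_left hii hκ.le
    have := mul_le_mul_of_nonneg_left hgbound hTpos.le
    calc (1/T) * Ig ≤ (1/T) * (2*Re*α₀*T + 2*Re*κ*(∫ τ in (0:ℝ)..T, F τ)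
          + Re * Real.log (H₁ 0 / H₁ T)) := this
      _ = 2*Re*α₀ + 2*Re*(κ * ((1/T) * ∫ τ in (0:ℝ)..T, F τ))
          + (Re/T) * Real.log (H₁ 0 / H₁ T) := by field_simp
      _ ≤ B := by rw [hBdef]; nlinarith [hRe]
  have hbB : (1/T) * Ih ≤ α₀ * A₀ * Re := hiii
  have hann : 0 ≤ (1/T) * Ig := by positivity
  have hbnn : 0 ≤ (1/T) * Ih := by positivity
  have key : (1/T) * ∫ τ in (0:ℝ)..T, (H₂ τ) ^ ((1:ℝ)/2) ≤
      ((1/T) * Ig) ^ ((1:ℝ)/2) * ((1/T) * Ih) ^ ((1:ℝ)/2) := by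
    have hsplit : ((1/T) * Ig) ^ ((1:ℝ)/2) * ((1/T) * Ih) ^ ((1:ℝ)/2)
        = (1/T) * (Ig ^ ((1:ℝ)/2) * Ih ^ ((1:ℝ)/2)) := by
      rw [Real.mul_rpow hTpos.le hIgnn, Real.mul_rpow hTpos.le hIhnn]
      have : ((1:ℝ)/T) ^ ((1:ℝ)/2) * ((1:ℝ)/T) ^ ((1:ℝ)/2) = 1/T := by
        rw [← Real.rpow_add hTpos]; norm_num
      calc ((1/T) ^ ((1:ℝ)/2) * Ig ^ ((1:ℝ)/2)) * ((1/T) ^ ((1:ℝ)/2) * Ih ^ ((1:ℝ)/2))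
          = (((1:ℝ)/T) ^ ((1:ℝ)/2) * ((1:ℝ)/T) ^ ((1:ℝ)/2)) * (Ig ^ ((1:ℝ)/2) * Ih ^ ((1:ℝ)/2)) := by
            ring
        _ = (1/T) * (Ig ^ ((1:ℝ)/2) * Ih ^ ((1:ℝ)/2)) := by rw [this]
    rw [hsplit]
    exact mul_le_mul_of_nonneg_left hCS hTpos.le
  refine key.trans ?_
  have h1 : ((1/T) * Ig) ^ ((1:ℝ)/2) ≤ B ^ ((1:ℝ)/2) :=
    Real.rpow_le_rpow hann haB (by norm_num)
  have h2 : ((1/T) * Ih) ^ ((1:ℝ)/2) ≤ (α₀ * A₀ * Re) ^ ((1:ℝ)/2) :=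
    Real.rpow_le_rpow hbnn hbB (by norm_num)
  exact mul_le_mul h1 h2 (Real.rpow_nonneg hbnn _) (Real.rpow_nonneg (hann.trans haB) _)
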